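/- Let G be a finitely generated group and σ, τ : G → G group endomorphisms such that every (σ,τ)-conjugacy class [a]_{σ,τ} = {σ(v)·a·τ(v)⁻¹ : v ∈ G} is finite (G is a (σ,τ)-FC group). Then every quasi-inner (σ,τ)-derivation D of ℂ[G] is inner: there exists p ∈ ℂ[G] such that D(x) = p·τ(x) − σ(x)·p for all x ∈ ℂ[G]. -/

import Mathlib

/-- Extension of a group endomorphism to a ℂ-algebra endomorphism of `ℂ[G]`. -/
noncomputable def algExt {G : Type*} [Group G] (σ : G →* G) :
    MonoidAlgebra ℂ G →ₐ[ℂ] MonoidAlgebra ℂ G :=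
  MonoidAlgebra.mapDomainAlgHom ℂ ℂ σ

/-- if `G` is a finitely generated `(σ,τ)`-FC group (every
`(σ,τ)`-conjugacy class is finite), then every quasi-inner `(σ,τ)`-derivation of `ℂ[G]`
is inner: `D = δ_p` for some `p ∈ ℂ[G]`. -/
theorem quasi_inner_derivation_is_inner_of_FC
    {G : Type*} [Group G] (hfg : Group.FG G) (σ τ : G →* G)
    (hFC : ∀ a : G, {x : G | ∃ v : G, x = σ v * a * (τ v)⁻¹}.Finite)
    (D : MonoidAlgebra ℂ G →ₗ[ℂ] MonoidAlgebra ℂ G)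
    (hD : ∀ a b : MonoidAlgebra ℂ G, D (a * b) = D a * algExt τ b + algExt σ a * D b)
    (hqi : ∀ g h : G, (σ g)⁻¹ * h = h * (τ g)⁻¹ → (D (MonoidAlgebra.of ℂ G g)).coeff h = 0) :
    ∃ p : MonoidAlgebra ℂ G, ∀ x : MonoidAlgebra ℂ G,
      D x = p * algExt τ x - algExt σ x * p := by
  classical
  -- the twisted action  g • x = σ g * x * (τ g)⁻¹
  set act : G → G → G := fun g x => σ g * x * (τ g)⁻¹ with hact
  have act_mul : ∀ g₁ g₂ x, act (g₁ * g₂) x = act g₁ (act g₂ x) := by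
    intro g₁ g₂ x
    simp only [hact, map_mul, mul_inv_rev]
    group
  have act_one : ∀ x, act 1 x = x := by intro x; simp [hact]
  -- the cocycle
  set F : G → G → ℂ := fun g x => (D (MonoidAlgebra.of ℂ G g)).coeff (σ g * x) with hF
  have halg : ∀ (ρ : G →* G) (g : G), algExt ρ (MonoidAlgebra.of ℂ G g)
      = MonoidAlgebra.single (ρ g) (1 : ℂ) := by
    intro ρ g
    simp [algExt, MonoidAlgebra.of_apply]
  have hcoc : ∀ g₁ g₂ x, F (g₁ * g₂) x = F g₁ (act g₂ x) + F g₂ x := by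
    intro g₁ g₂ x
    have h := hD (MonoidAlgebra.of ℂ G g₁) (MonoidAlgebra.of ℂ G g₂)
    rw [← map_mul, halg, halg] at h
    have h2 : (D ((MonoidAlgebra.of ℂ G) (g₁ * g₂))).coeff (σ g₁ * (σ g₂ * x))
        = (D ((MonoidAlgebra.of ℂ G) g₁) * MonoidAlgebra.single (τ g₂) (1:ℂ)
          + MonoidAlgebra.single (σ g₁) (1:ℂ) * D ((MonoidAlgebra.of ℂ G) g₂)).coeff
            (σ g₁ * (σ g₂ * x)) := by rw [h]
    have e1 : σ (g₁ * g₂) * x = σ g₁ * (σ g₂ * x) := by rw [map_mul, mul_assoc]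
    have e2 : σ g₁ * (σ g₂ * x) * (τ g₂)⁻¹ = σ g₁ * act g₂ x := by
      simp only [hact]; group
    have e3 : (σ g₁)⁻¹ * (σ g₁ * (σ g₂ * x)) = σ g₂ * x := by group
    rw [MonoidAlgebra.coeff_add, Finsupp.add_apply, MonoidAlgebra.coeff_mul_single_apply,
      MonoidAlgebra.coeff_single_mul_apply, one_mul, mul_one, e2, e3] at h2
    simp only [hF, e1]
    exact h2
  have hstab : ∀ g x, act g x = x → F g x = 0 := by
    intro g x h
    refine hqi g (σ g * x) ?_
    rw [inv_mul_cancel_left]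
    calc x = act g x := h.symm
    _ = (σ g * x) * (τ g)⁻¹ := by simp only [hact]
  have hone : ∀ x, F 1 x = 0 := by
    intro x
    have := hcoc 1 1 x
    rw [one_mul, act_one] at this
    linear_combination (-1 : ℂ) * this
  -- F g x depends only on (act g x, x)
  have hfact4 : ∀ a b x, act a x = act b x → F a x = F b x := by
    intro a b x h
    have ha : a = b * (b⁻¹ * a) := by group
    have hstb : act (b⁻¹ * a) x = x := by
      rw [act_mul, h, ← act_mul, inv_mul_cancel, act_one]
    rw [ha, hcoc, hstb, hstab (b⁻¹ * a) x hstb, add_zero]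
  -- the orbit equivalence relation
  set E : G → G → Prop := fun x y => ∃ g, act g x = y with hE
  have Erefl : ∀ x, E x x := fun x => ⟨1, act_one x⟩
  have Esymm : ∀ {x y}, E x y → E y x := by
    rintro x y ⟨g, rfl⟩
    exact ⟨g⁻¹, by rw [← act_mul, inv_mul_cancel, act_one]⟩
  have Etrans : ∀ {x y z}, E x y → E y z → E x z := by
    rintro x y z ⟨g, rfl⟩ ⟨g', rfl⟩
    exact ⟨g' * g, act_mul g' g x⟩
  letI myS : Setoid G := ⟨E, ⟨Erefl, Esymm, Etrans⟩⟩
  set rep : G → G := fun x => (@Quotient.mk G myS x).out with hrep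
  have hrep1 : ∀ x, E (rep x) x := fun x => Quotient.mk_out x
  have hrep2 : ∀ x y, E x y → rep x = rep y := fun x y h =>
    congrArg Quotient.out (Quotient.sound h)
  -- the potential
  set pf : G → ℂ := fun x => F (hrep1 x).choose (rep x) with hpf
  have hpfspec : ∀ x, act (hrep1 x).choose (rep x) = x := fun x => (hrep1 x).choose_spec
  -- F is the coboundary of pf
  have hpf_eq : ∀ x e, act e (rep x) = x → pf x = F e (rep x) := by
    intro x e he
    exact hfact4 _ _ _ (by rw [hpfspec x, he])
  have hcob : ∀ g x, F g x = pf (act g x) - pf x := by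
    intro g x
    have hExy : E x (act g x) := ⟨g, rfl⟩
    have hr : rep (act g x) = rep x := (hrep2 x (act g x) hExy).symm
    set d := (hrep1 x).choose with hd
    have hds : act d (rep x) = x := hpfspec x
    have hpf1 : pf (act g x) = F (g * d) (rep (act g x)) := by
      refine hpf_eq (act g x) (g * d) ?_
      rw [hr, act_mul, hds]
    rw [hr, hcoc, hds] at hpf1
    have hpf2 : pf x = F d (rep x) := rfl
    rw [hpf1, hpf2]; ring
  -- a finite generating set
  obtain ⟨S, hScl, hSfin⟩ := Group.fg_iff.mp hfg
  -- good points: generators vanish on the whole orbit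
  set Good : G → Prop := fun x => ∀ s ∈ S, ∀ y, E y x → F s y = 0 with hGood
  have hGoodmono : ∀ x y, E y x → Good x → Good y := by
    intro x y hyx hx s hs z hzy
    exact hx s hs z (Etrans hzy hyx)
  have hvanish : ∀ g x, Good x → F g x = 0 := by
    have key : ∀ g ∈ Subgroup.closure S, ∀ x, Good x → F g x = 0 := by
      intro g hg
      induction hg using Subgroup.closure_induction with
      | mem s hs => exact fun x hx => hx s hs x (Erefl x)
      | one => exact fun x _ => hone x
      | mul a b _ _ iha ihb =>
        intro x hx
        have hE1 : E (act b x) x := Esymm ⟨b, rfl⟩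
        rw [hcoc, iha (act b x) (hGoodmono x (act b x) hE1 hx), ihb x hx, add_zero]
      | inv a _ ih =>
        intro x hx
        have h := hcoc a a⁻¹ x
        rw [mul_inv_cancel, hone] at h
        have hE1 : E (act a⁻¹ x) x := Esymm ⟨a⁻¹, rfl⟩
        have h2 := ih (act a⁻¹ x) (hGoodmono x (act a⁻¹ x) hE1 hx)
        linear_combination (-1 : ℂ) * h2 - h
    intro g x hx
    exact key g (hScl ▸ Subgroup.mem_top g) x hx
  -- finiteness of the support of F s ·
  have hFsupp : ∀ s : G, {x | F s x ≠ 0}.Finite := by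
    intro s
    have hsub : {x | F s x ≠ 0} ⊆ (fun x => σ s * x) ⁻¹' ↑(D (MonoidAlgebra.of ℂ G s)).coeff.support := by
      intro x hx
      simp only [Set.mem_preimage, Finset.coe_sort_coe, Finset.mem_coe, Finsupp.mem_support_iff]
      exact hx
    exact (((D (MonoidAlgebra.of ℂ G s)).coeff.support.finite_toSet).preimage
      ((mul_right_injective (σ s)).injOn)).subset hsub
  -- the set of bad points is finite
  have hBadFin : {x | ¬ Good x}.Finite := by
    have hsub : {x | ¬ Good x} ⊆ ⋃ s ∈ S, ⋃ y ∈ {y | F s y ≠ 0},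
        {x | ∃ v : G, x = σ v * y * (τ v)⁻¹} := by
      intro x hx
      simp only [hGood, Set.mem_setOf_eq] at hx
      push_neg at hx
      obtain ⟨s, hs, y, hyx, hFy⟩ := hx
      refine Set.mem_biUnion hs (Set.mem_biUnion hFy ?_)
      obtain ⟨g, hg⟩ := hyx
      exact ⟨g, hg.symm⟩
    exact (Set.Finite.biUnion hSfin fun s _ =>
      Set.Finite.biUnion (hFsupp s) fun y _ => hFC y).subset hsub
  -- good points have zero potential
  have hGoodpf : ∀ h, Good h → pf h = 0 := by
    intro h hh
    have : Good (rep h) := hGoodmono h (rep h) (hrep1 h) hh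
    exact hvanish _ (rep h) this
  -- the inner element
  set T : Finset G := hBadFin.toFinset with hT
  refine ⟨∑ x ∈ T, MonoidAlgebra.single x (pf x), ?_⟩
  set p : MonoidAlgebra ℂ G := ∑ x ∈ T, MonoidAlgebra.single x (pf x) with hp
  have hpapp : ∀ h, p.coeff h = pf h := by
    intro h
    rw [hp, MonoidAlgebra.coeff_sum, Finsupp.finset_sum_apply]
    simp only [MonoidAlgebra.coeff_single]
    rw [Finset.sum_eq_single h (fun b _ hbh => Finsupp.single_eq_of_ne' hbh)
      (fun hh => ?_)]
    · simp
    · have : Good h := by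
        by_contra hc
        exact hh (hBadFin.mem_toFinset.mpr hc)
      rw [hGoodpf h this, Finsupp.single_zero, Finsupp.coe_zero, Pi.zero_apply]
  -- the identity on basis elements
  have hofg : ∀ g, D (MonoidAlgebra.of ℂ G g)
      = p * MonoidAlgebra.single (τ g) 1 - MonoidAlgebra.single (σ g) 1 * p := by
    intro g
    ext h
    rw [MonoidAlgebra.coeff_sub, Finsupp.sub_apply, MonoidAlgebra.coeff_mul_single_apply,
      MonoidAlgebra.coeff_single_mul_apply,
      one_mul, mul_one, hpapp, hpapp]
    have h1 : (D (MonoidAlgebra.of ℂ G g)).coeff h = F g ((σ g)⁻¹ * h) := by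
      simp only [hF, mul_inv_cancel_left]
    have h2 : act g ((σ g)⁻¹ * h) = h * (τ g)⁻¹ := by
      simp only [hact, mul_inv_cancel_left]
    rw [h1, hcob, h2]
  -- conclude by linearity
  intro x
  refine MonoidAlgebra.induction_on (motive := fun y => D y = p * algExt τ y - algExt σ y * p)
    x ?_ ?_ ?_
  · intro g
    rw [halg, halg, hofg]
  · intro f g hf hg
    rw [map_add, map_add, map_add, hf, hg, mul_add, add_mul]
    exact sub_add_sub_comm _ _ _ _
  · intro r f hf
    rw [map_smul, map_smul, map_smul, hf, mul_smul_comm, smul_mul_assoc, smul_sub]
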